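/- arXiv:1707.02650 — 3 statements merged into one kernel-verified Lean document; each statement's English description precedes it below -/
import Mathlib

section
/- Let n ≥ 1 and let a_1,…,a_n be positive integers with ∑ a_i = 2b. In the graph G' (nodes {w_0,…,w_n} ∪ {v_1,…,v_n}; for each i, edge (w_{i-1},w_i) with delay a_i, and edges (w_{i-1},v_i),(v_i,w_i) with delay 0; all capacities 1), every feasible flow of rate R = 2 from s = w_0 to t = w_n places flow rate exactly 1 on every edge of G', and its total weighted delay satisfies ∑_{p∈P} f^p·d^p = ∑_{e∈E} f_e·d_e = 2b. -/
/-- A directed network: each edge has a source node, a destination node,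
a non-negative integer capacity and a non-negative integer delay. -/
structure Network (V : Type) (E : Type) where
  src : E → V
  dst : E → V
  cap : E → ℕ
  delay : E → ℕ

namespace Network

variable {V E : Type}

/-- `N.IsPath s t p` : the list of edges `p` forms a directed path from `s` to `t`. -/
def IsPath (N : Network V E) : V → V → List E → Prop
  | s, t, [] => s = t
  | s, t, e :: es => N.src e = s ∧ N.IsPath (N.dst e) t es

/-- The delay of a path: the sum of the delays of its edges. -/
def pathDelay (N : Network V E) (p : List E) : ℕ := (p.map N.delay).sum

end Network

/-- A (path-based) flow from `s` to `t`: a finitely-supported assignment of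
non-negative rates to `s`–`t` paths. -/
structure PathFlow {V E : Type} (N : Network V E) (s t : V) where
  f : List E →₀ ℝ
  nonneg : ∀ p, 0 ≤ f p
  isPath : ∀ p ∈ f.support, N.IsPath s t p

namespace PathFlow

variable {V E : Type} [DecidableEq E] {N : Network V E} {s t : V}

/-- Total rate of the flow. -/
noncomputable def totalRate (F : PathFlow N s t) : ℝ := ∑ p ∈ F.f.support, F.f p

/-- Rate carried by edge `e`: the sum of the rates of all paths containing `e`. -/
noncomputable def edgeRate (F : PathFlow N s t) (e : E) : ℝ :=
  ∑ p ∈ F.f.support, if e ∈ p then F.f p else 0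

/-- Feasibility with rate `R`: total rate is `R` and every edge capacity is respected. -/
def Feasible (F : PathFlow N s t) (R : ℝ) : Prop :=
  F.totalRate = R ∧ ∀ e, F.edgeRate e ≤ (N.cap e : ℝ)

/-- The maximum delay over flow-carrying paths. -/
def maxDelay (F : PathFlow N s t) : ℕ := F.f.support.sup N.pathDelay

/-- An integer flow assigns a non-negative integer rate to every path. -/
def IsInteger (F : PathFlow N s t) : Prop := ∀ p, ∃ m : ℕ, F.f p = (m : ℝ)

end PathFlow
/-- Nodes of the partition-reduction graph `G'`: `Sum.inl i` is `w_i` (`i = 0,…,n`),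
`Sum.inr i` is `v_{i+1}` (`i = 0,…,n-1`). -/
abbrev GV (n : ℕ) := Fin (n + 1) ⊕ Fin n

/-- Edges of `G'`: `Sum.inl i` is the direct edge `(w_i, w_{i+1})` of delay `a i`;
`Sum.inr (Sum.inl i)` is `(w_i, v_{i+1})` and `Sum.inr (Sum.inr i)` is `(v_{i+1}, w_{i+1})`,
both of delay `0`. All edges have capacity `1`. -/
abbrev GE (n : ℕ) := Fin n ⊕ (Fin n ⊕ Fin n)

/-- The graph `G'` reduced from the partition problem. -/
def Gpart (n : ℕ) (a : Fin n → ℕ) : Network (GV n) (GE n) where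
  src
    | Sum.inl i => Sum.inl i.castSucc
    | Sum.inr (Sum.inl i) => Sum.inl i.castSucc
    | Sum.inr (Sum.inr i) => Sum.inr i
  dst
    | Sum.inl i => Sum.inl i.succ
    | Sum.inr (Sum.inl i) => Sum.inr i
    | Sum.inr (Sum.inr i) => Sum.inl i.succ
  cap := fun _ => 1
  delay
    | Sum.inl i => a i
    | Sum.inr _ => 0

def gA {n : ℕ} (v : GV n) (i : Fin n) : ℕ :=
  match v with
  | Sum.inl j => if (j : ℕ) ≤ (i : ℕ) then 1 else 0
  | Sum.inr j => if (j : ℕ) < (i : ℕ) then 1 else 0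

def gB {n : ℕ} (v : GV n) (i : Fin n) : ℕ :=
  match v with
  | Sum.inl _ => 0
  | Sum.inr j => if i = j then 1 else 0

lemma GE_beq_iff {n : ℕ} (e e' : GE n) : (e == e') = true ↔ e = e' := by
  rcases e with k | k | k <;> rcases e' with m | m | m
  · rw [show ((Sum.inl k : GE n) == Sum.inl m) = (k == m) from rfl, beq_iff_eq]; simp
  · rw [show ((Sum.inl k : GE n) == Sum.inr (Sum.inl m)) = false from rfl]; simp
  · rw [show ((Sum.inl k : GE n) == Sum.inr (Sum.inr m)) = false from rfl]; simp
  · rw [show ((Sum.inr (Sum.inl k) : GE n) == Sum.inl m) = false from rfl]; simp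
  · rw [show ((Sum.inr (Sum.inl k) : GE n) == Sum.inr (Sum.inl m)) = (k == m) from rfl,
      beq_iff_eq]; simp
  · rw [show ((Sum.inr (Sum.inl k) : GE n) == Sum.inr (Sum.inr m)) = false from rfl]; simp
  · rw [show ((Sum.inr (Sum.inr k) : GE n) == Sum.inl m) = false from rfl]; simp
  · rw [show ((Sum.inr (Sum.inr k) : GE n) == Sum.inr (Sum.inl m)) = false from rfl]; simp
  · rw [show ((Sum.inr (Sum.inr k) : GE n) == Sum.inr (Sum.inr m)) = (k == m) from rfl,
      beq_iff_eq]; simp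

lemma GE_count_cons {n : ℕ} (e x : GE n) (l : List (GE n)) :
    (x :: l).count e = l.count e + if x = e then 1 else 0 := by
  rw [List.count_cons]
  congr 1
  simp only [GE_beq_iff]

lemma GE_count_pos {n : ℕ} {e : GE n} {l : List (GE n)} (h : e ∈ l) : 0 < l.count e := by
  induction l with
  | nil => simp at h
  | cons x l ih =>
    rw [GE_count_cons]
    rcases List.mem_cons.mp h with rfl | h'
    · simp
    · have := ih h'
      omega

lemma GE_count_zero {n : ℕ} {e : GE n} {l : List (GE n)} (h : e ∉ l) : l.count e = 0 := by
  induction l with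
  | nil => simp
  | cons x l ih =>
    rw [GE_count_cons]
    have h1 : x ≠ e := fun hh => h (hh ▸ (List.mem_cons_self : x ∈ x :: l))
    have h2 : e ∉ l := fun hh => h (List.mem_cons_of_mem _ hh)
    simp [h1, ih h2]

lemma gpath_count {n : ℕ} (a : Fin n → ℕ) :
    ∀ (p : List (GE n)) (v : GV n),
      (Gpart n a).IsPath v (Sum.inl (Fin.last n)) p →
      ∀ i : Fin n,
        p.count (Sum.inl i) + p.count (Sum.inr (Sum.inl i)) = gA v i ∧
        p.count (Sum.inr (Sum.inr i)) = p.count (Sum.inr (Sum.inl i)) + gB v i := by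
  intro p
  induction p with
  | nil =>
    intro v h i
    have hv : v = Sum.inl (Fin.last n) := h
    subst hv
    have hi : (i : ℕ) < n := i.isLt
    simp only [List.count_nil, gA, gB, Fin.val_last]
    refine ⟨?_, by simp⟩
    split_ifs with h1 <;> omega
  | cons e es ih =>
    intro v h i
    obtain ⟨hsrc, hrest⟩ := h
    rcases e with k | k | k
    · have hv : v = Sum.inl k.castSucc := hsrc.symm
      subst hv
      obtain ⟨H1, H2⟩ := ih (Sum.inl k.succ) hrest i
      simp only [gA, gB, Fin.val_succ, Fin.coe_castSucc, add_zero] at H1 H2 ⊢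
      simp only [GE_count_cons, Sum.inl.injEq, Sum.inr.injEq, reduceCtorEq,
        if_false, add_zero, Fin.ext_iff] at H1 H2 ⊢
      constructor <;> split_ifs at H1 H2 ⊢ <;> omega
    · have hv : v = Sum.inl k.castSucc := hsrc.symm
      subst hv
      obtain ⟨H1, H2⟩ := ih (Sum.inr k) hrest i
      simp only [gA, gB, Fin.coe_castSucc, add_zero] at H1 H2 ⊢
      simp only [GE_count_cons, Sum.inl.injEq, Sum.inr.injEq, reduceCtorEq,
        if_false, add_zero, Fin.ext_iff] at H1 H2 ⊢
      constructor <;> split_ifs at H1 H2 ⊢ <;> omega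
    · have hv : v = Sum.inr k := hsrc.symm
      subst hv
      obtain ⟨H1, H2⟩ := ih (Sum.inl k.succ) hrest i
      simp only [gA, gB, Fin.val_succ, add_zero] at H1 H2 ⊢
      simp only [GE_count_cons, Sum.inl.injEq, Sum.inr.injEq, reduceCtorEq,
        if_false, add_zero, Fin.ext_iff] at H1 H2 ⊢
      constructor <;> split_ifs at H1 H2 ⊢ <;> omega

lemma GE_sum_map_count {n : ℕ} (f : GE n → ℕ) (l : List (GE n)) :
    (l.map f).sum = ∑ e : GE n, l.count e * f e := by
  induction l with
  | nil => simp
  | cons x l ih =>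
    simp only [List.map_cons, List.sum_cons, ih, GE_count_cons]
    rw [Finset.sum_congr rfl (fun e _ => add_mul (l.count e) _ (f e)),
      Finset.sum_add_distrib]
    have hx : ∑ e : GE n, (if x = e then 1 else 0) * f e = f x := by
      rw [Finset.sum_congr rfl (fun e _ => by rw [ite_mul, one_mul, zero_mul])]
      simp
    omega

/-- **Every feasible rate-2 flow in `G'` saturates every edge (Theorem 1, "if" part setup).**
For `n ≥ 1` and positive integers `a i` summing to `2 b`, every feasible flow of rate `R = 2`
from `w₀` to `wₙ` in `G'` places a flow rate of exactly `1` on every edge, and its total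
weighted delay satisfies `∑_p f^p · d^p = ∑_e f_e · d_e = 2 b`. -/
theorem gpart_flow_saturates (n b : ℕ) (hn : 1 ≤ n) (a : Fin n → ℕ)
    (ha : ∀ i, 0 < a i) (hsum : ∑ i, a i = 2 * b)
    (F : PathFlow (Gpart n a) (Sum.inl 0) (Sum.inl (Fin.last n)))
    (hF : F.Feasible 2) :
    (∀ e : GE n, F.edgeRate e = 1) ∧
    (∑ p ∈ F.f.support, F.f p * ((Gpart n a).pathDelay p : ℝ)
        = ∑ e : GE n, F.edgeRate e * ((Gpart n a).delay e : ℝ)) ∧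
    (∑ e : GE n, F.edgeRate e * ((Gpart n a).delay e : ℝ) = 2 * b) := by
  classical
  obtain ⟨hrate2, hcap⟩ := hF
  have key : ∀ p ∈ F.f.support, ∀ i : Fin n,
      p.count (Sum.inl i) + p.count (Sum.inr (Sum.inl i)) = 1 ∧
      p.count (Sum.inr (Sum.inr i)) = p.count (Sum.inr (Sum.inl i)) := by
    intro p hp i
    have H := gpath_count a p (Sum.inl 0) (F.isPath p hp) i
    simpa [gA, gB] using H
  have hcount1 : ∀ p ∈ F.f.support, ∀ e : GE n, p.count e ≤ 1 := by
    intro p hp e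
    rcases e with i | i | i <;> have := key p hp i <;> omega
  have hrateC : ∀ e : GE n, F.edgeRate e = ∑ p ∈ F.f.support, F.f p * (p.count e : ℝ) := by
    intro e
    unfold PathFlow.edgeRate
    refine Finset.sum_congr rfl fun p hp => ?_
    rcases Classical.em (e ∈ p) with hm | hm
    · have h1 : p.count e = 1 := le_antisymm (hcount1 p hp e) (GE_count_pos hm)
      simp [hm, h1]
    · simp [hm, GE_count_zero hm]
  have hle : ∀ e : GE n, F.edgeRate e ≤ 1 := by
    intro e
    have := hcap e
    simpa [Gpart] using this
  have hsum2 : ∀ i : Fin n, F.edgeRate (Sum.inl i) + F.edgeRate (Sum.inr (Sum.inl i)) = 2 := by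
    intro i
    rw [hrateC, hrateC, ← Finset.sum_add_distrib]
    have heach : ∀ p ∈ F.f.support,
        F.f p * (p.count (Sum.inl i) : ℝ) + F.f p * (p.count (Sum.inr (Sum.inl i)) : ℝ)
          = F.f p := by
      intro p hp
      have h1 := (key p hp i).1
      have h2 : (p.count (Sum.inl i) : ℝ) + (p.count (Sum.inr (Sum.inl i)) : ℝ) = 1 := by
        exact_mod_cast congrArg (Nat.cast : ℕ → ℝ) h1
      rw [← mul_add, h2, mul_one]
    rw [Finset.sum_congr rfl heach]
    exact hrate2
  have hall : ∀ e : GE n, F.edgeRate e = 1 := by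
    have h12 : ∀ i : Fin n, F.edgeRate (Sum.inl i) = 1 ∧ F.edgeRate (Sum.inr (Sum.inl i)) = 1 := by
      intro i
      have hs := hsum2 i
      have ha1 := hle (Sum.inl i)
      have ha2 := hle (Sum.inr (Sum.inl i))
      constructor <;> linarith
    intro e
    rcases e with i | i | i
    · exact (h12 i).1
    · exact (h12 i).2
    · have : F.edgeRate (Sum.inr (Sum.inr i)) = F.edgeRate (Sum.inr (Sum.inl i)) := by
        rw [hrateC, hrateC]
        refine Finset.sum_congr rfl fun p hp => ?_
        rw [(key p hp i).2]
      rw [this]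
      exact (h12 i).2
  have hpd : ∀ p : List (GE n), ((Gpart n a).pathDelay p : ℝ)
      = ∑ e : GE n, (p.count e : ℝ) * (((Gpart n a).delay e : ℕ) : ℝ) := by
    intro p
    unfold Network.pathDelay
    rw [GE_sum_map_count ((Gpart n a).delay) p]
    push_cast
    rfl
  have hmid : ∑ p ∈ F.f.support, F.f p * ((Gpart n a).pathDelay p : ℝ)
      = ∑ e : GE n, F.edgeRate e * ((Gpart n a).delay e : ℝ) := by
    calc
      ∑ p ∈ F.f.support, F.f p * ((Gpart n a).pathDelay p : ℝ)
          = ∑ p ∈ F.f.support, ∑ e : GE n,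
              F.f p * ((p.count e : ℝ) * ((Gpart n a).delay e : ℝ)) := by
            refine Finset.sum_congr rfl fun p _ => ?_
            rw [hpd, Finset.mul_sum]
      _ = ∑ e : GE n, ∑ p ∈ F.f.support,
              F.f p * ((p.count e : ℝ) * ((Gpart n a).delay e : ℝ)) := Finset.sum_comm
      _ = ∑ e : GE n, F.edgeRate e * ((Gpart n a).delay e : ℝ) := by
            refine Finset.sum_congr rfl fun e _ => ?_
            rw [hrateC, Finset.sum_mul]
            exact Finset.sum_congr rfl fun p _ => by ring
  have hfin : ∑ e : GE n, F.edgeRate e * ((Gpart n a).delay e : ℝ) = 2 * b := by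
    rw [Finset.sum_congr rfl fun e _ => by rw [hall e, one_mul]]
    rw [Fintype.sum_sum_type]
    have hz : ∑ e : Fin n ⊕ Fin n, (((Gpart n a).delay (Sum.inr e) : ℕ) : ℝ) = 0 := by
      simp [Gpart]
    rw [hz, add_zero]
    have : ∑ i : Fin n, (((Gpart n a).delay (Sum.inl i) : ℕ) : ℝ) = ∑ i : Fin n, (a i : ℝ) := by
      refine Finset.sum_congr rfl fun i _ => ?_
      simp [Gpart]
    rw [this]
    rw [← Nat.cast_sum, hsum]
    push_cast
    ring
  exact ⟨hall, hmid, hfin⟩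
end

section
/- Let a_1,…,a_n be positive integers with ∑ a_i = 2b. If in the graph G' (nodes {w_0,…,w_n} ∪ {v_1,…,v_n}; for each i, edge (w_{i-1},w_i) with delay a_i, and edges (w_{i-1},v_i),(v_i,w_i) with delay 0; all capacities 1) there exists a feasible flow of rate R = 2 from w_0 to w_n whose maximum delay is at most b, then there is a partition of {a_1,…,a_n} into two sets A_1, A_2 with ∑_{a_i∈A_1} a_i = ∑_{a_j∈A_2} a_j = b. -/
/-- Decidability of list membership (workaround for stuck instance search). -/
instance (priority := high) gpartListMemDec {α : Type} [DecidableEq α] (e : α) (p : List α) :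
    Decidable (e ∈ p) := decidable_of_iff (∃ x ∈ p, x = e) (by simp)

open Finset in
lemma gpart_path_struct (n : ℕ) (a : Fin n → ℕ) :
    ∀ (p : List (GE n)) (i : Fin (n+1)),
      (Gpart n a).IsPath (Sum.inl i) (Sum.inl (Fin.last n)) p →
      (∀ j : Fin n, ((Sum.inl j ∈ p ∨ Sum.inr (Sum.inl j) ∈ p) ↔ (i : ℕ) ≤ (j : ℕ)) ∧
        ¬ (Sum.inl j ∈ p ∧ Sum.inr (Sum.inl j) ∈ p)) ∧
      (Gpart n a).pathDelay p = ∑ j ∈ univ.filter (fun j => Sum.inl j ∈ p), a j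
  | [], i, h => by
      obtain rfl : i = Fin.last n := by simpa [Network.IsPath] using h
      refine ⟨fun j => ?_, by simp [Network.pathDelay]⟩
      have := j.isLt
      simp [Fin.last]
      try omega
  | Sum.inl k :: es, i, h => by
      obtain ⟨h1, h2⟩ := h
      have hki : k.castSucc = i := by simpa [Gpart] using h1
      have h2' : (Gpart n a).IsPath (Sum.inl k.succ) (Sum.inl (Fin.last n)) es := by
        simpa [Gpart] using h2
      have IH := gpart_path_struct n a es k.succ h2'
      have hiv : (i : ℕ) = (k : ℕ) := by rw [← hki]; simp
      have hknot : Sum.inl k ∉ es := fun hm => by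
        have := ((IH.1 k).1).1 (Or.inl hm); simp at this
      constructor
      · intro j
        have IHj := IH.1 j
        have hsv : (k.succ : ℕ) = (k : ℕ) + 1 := by simp
        constructor
        · constructor
          · rintro (hm | hm)
            · rcases List.mem_cons.1 hm with he | hm'
              · obtain rfl : j = k := by simpa using he
                omega
              · have := IHj.1.1 (Or.inl hm'); omega
            · have hm' : Sum.inr (Sum.inl j) ∈ es := by
                rcases List.mem_cons.1 hm with he | hm' <;> simp_all
              have := IHj.1.1 (Or.inr hm'); omega
          · intro hij
            rcases eq_or_lt_of_le hij with heq | hlt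
            · obtain rfl : j = k := Fin.ext (by omega)
              exact Or.inl (List.mem_cons.2 (Or.inl rfl))
            · rcases IHj.1.2 (by omega) with hm | hm
              · exact Or.inl (List.mem_cons.2 (Or.inr hm))
              · exact Or.inr (List.mem_cons.2 (Or.inr hm))
        · rintro ⟨hm1, hm2⟩
          have hm2' : Sum.inr (Sum.inl j) ∈ es := by
            rcases List.mem_cons.1 hm2 with he | hm' <;> simp_all
          rcases List.mem_cons.1 hm1 with he | hm1'
          · obtain rfl : j = k := by simpa using he
            have := IHj.1.1 (Or.inr hm2'); simp at this
          · exact IHj.2 ⟨hm1', hm2'⟩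
      · have hset : univ.filter (fun j => Sum.inl j ∈ (Sum.inl k :: es : List (GE n)))
            = insert k (univ.filter (fun j => Sum.inl j ∈ es)) := by
          ext j
          simp [List.mem_cons]
        rw [hset, Finset.sum_insert (by simp [hknot])]
        have hd : (Gpart n a).pathDelay (Sum.inl k :: es) = a k + (Gpart n a).pathDelay es := by
          simp [Network.pathDelay, Gpart]
        rw [hd, IH.2]
  | Sum.inr (Sum.inl k) :: es, i, h => by
      obtain ⟨h1, h2⟩ := h
      have hki : k.castSucc = i := by simpa [Gpart] using h1
      have hiv : (i : ℕ) = (k : ℕ) := by rw [← hki]; simp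
      match es, h2 with
      | [], h2 => exact absurd h2 (by simp [Network.IsPath, Gpart])
      | Sum.inl m :: es', h2 => exact absurd h2.1 (by simp [Gpart])
      | Sum.inr (Sum.inl m) :: es', h2 => exact absurd h2.1 (by simp [Gpart])
      | Sum.inr (Sum.inr m) :: es', h2 =>
        obtain ⟨h3, h4⟩ := h2
        have hmk : m = k := by simpa [Gpart] using h3
        subst hmk
        have h4' : (Gpart n a).IsPath (Sum.inl m.succ) (Sum.inl (Fin.last n)) es' := by
          simpa [Gpart] using h4
        have IH := gpart_path_struct n a es' m.succ h4'
        refine ⟨fun j => ?_, ?_⟩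
        · have IHj := IH.1 j
          have hsv : (m.succ : ℕ) = (m : ℕ) + 1 := by simp
          have hmm1 : (Sum.inl j ∈ (Sum.inr (Sum.inl m) :: Sum.inr (Sum.inr m) :: es' : List (GE n)))
              ↔ Sum.inl j ∈ es' := by simp [List.mem_cons]
          have hmm2 : (Sum.inr (Sum.inl j) ∈ (Sum.inr (Sum.inl m) :: Sum.inr (Sum.inr m) :: es' : List (GE n)))
              ↔ j = m ∨ Sum.inr (Sum.inl j) ∈ es' := by simp [List.mem_cons]
          rw [hmm1, hmm2]
          constructor
          · constructor
            · rintro (hm | (rfl | hm))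
              · have := IHj.1.1 (Or.inl hm); omega
              · omega
              · have := IHj.1.1 (Or.inr hm); omega
            · intro hij
              rcases eq_or_lt_of_le hij with heq | hlt
              · exact Or.inr (Or.inl (Fin.ext (by omega)).symm)
              · rcases IHj.1.2 (by omega) with hm | hm
                · exact Or.inl hm
                · exact Or.inr (Or.inr hm)
          · rintro ⟨hm1, rfl | hm2⟩
            · have := IHj.1.1 (Or.inl hm1); simp at this
            · exact IHj.2 ⟨hm1, hm2⟩
        · have hset : univ.filter
              (fun j => Sum.inl j ∈ (Sum.inr (Sum.inl m) :: Sum.inr (Sum.inr m) :: es' : List (GE n)))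
              = univ.filter (fun j => Sum.inl j ∈ es') := by
            ext j; simp [List.mem_cons]
          rw [hset, ← IH.2]
          simp [Network.pathDelay, Gpart]
  | Sum.inr (Sum.inr m) :: es, i, h => by
      exact absurd h.1 (by simp [Gpart])

/-- **"If" part of Theorem 1.** For `n ≥ 1` and positive integers `a i` summing to `2 b`:
if there is a feasible flow of rate `R = 2` from `w₀` to `wₙ` in `G'` whose maximum delay is
at most `b`, then the `a i` can be partitioned into two sets each summing to `b`
(the set indexed by `S` and the one indexed by its complement). -/
theorem gpart_flow_to_partition (n b : ℕ) (hn : 1 ≤ n) (a : Fin n → ℕ)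
    (ha : ∀ i, 0 < a i) (hsum : ∑ i, a i = 2 * b)
    (F : PathFlow (Gpart n a) (Sum.inl 0) (Sum.inl (Fin.last n)))
    (hF : F.Feasible 2) (hD : F.maxDelay ≤ b) :
    ∃ S : Finset (Fin n), ∑ i ∈ S, a i = b ∧ ∑ i ∈ Sᶜ, a i = b := by
  classical
  obtain ⟨hrate, hcap⟩ := hF
  rw [PathFlow.totalRate] at hrate
  have hstruct := fun p (hp : p ∈ F.f.support) => gpart_path_struct n a p 0 (F.isPath p hp)
  -- each direct edge carries rate exactly 1
  have hAone : ∀ j : Fin n, F.edgeRate (Sum.inl j) = 1 := by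
    intro j
    have hsum2 : F.edgeRate (Sum.inl j) + F.edgeRate (Sum.inr (Sum.inl j)) = 2 := by
      rw [PathFlow.edgeRate, PathFlow.edgeRate, ← Finset.sum_add_distrib, ← hrate]
      apply Finset.sum_congr rfl
      intro p hp
      have h1 := (hstruct p hp).1 j
      have hmem : Sum.inl j ∈ p ∨ Sum.inr (Sum.inl j) ∈ p := h1.1.2 (by simp)
      rcases hmem with hm | hm
      · have hnm : Sum.inr (Sum.inl j) ∉ p := fun hm2 => h1.2 ⟨hm, hm2⟩
        simp [hm, hnm]
      · have hnm : Sum.inl j ∉ p := fun hm2 => h1.2 ⟨hm2, hm⟩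
        simp [hm, hnm]
    have c1 := hcap (Sum.inl j)
    have c2 := hcap (Sum.inr (Sum.inl j))
    simp only [Gpart, Nat.cast_one] at c1 c2
    have c1' : F.edgeRate (Sum.inl j) ≤ 1 := c1
    have c2' : F.edgeRate (Sum.inr (Sum.inl j)) ≤ 1 := c2
    linarith
  -- the flow-weighted total delay equals 2b
  have hB : ∑ p ∈ F.f.support, F.f p * ((Gpart n a).pathDelay p : ℝ) = 2 * b := by
    have h1 : ∀ p ∈ F.f.support, F.f p * ((Gpart n a).pathDelay p : ℝ)
        = ∑ j : Fin n, (if Sum.inl j ∈ p then F.f p * (a j : ℝ) else 0) := by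
      intro p hp
      rw [(hstruct p hp).2]
      push_cast
      rw [Finset.mul_sum, Finset.sum_filter]
    rw [Finset.sum_congr rfl h1, Finset.sum_comm]
    have h2 : ∀ j : Fin n, ∑ p ∈ F.f.support, (if Sum.inl j ∈ p then F.f p * (a j : ℝ) else 0)
        = (a j : ℝ) := by
      intro j
      have hone := hAone j
      rw [PathFlow.edgeRate] at hone
      calc ∑ p ∈ F.f.support, (if Sum.inl j ∈ p then F.f p * (a j : ℝ) else 0)
          = (∑ p ∈ F.f.support, if Sum.inl j ∈ p then F.f p else 0) * (a j : ℝ) := by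
            rw [Finset.sum_mul]
            exact Finset.sum_congr rfl fun p _ => by split <;> simp
        _ = (a j : ℝ) := by
            have h' : (∑ p ∈ F.f.support, if Sum.inl j ∈ p then F.f p else 0) = 1 := by
              rw [← hone]
              exact Finset.sum_congr rfl fun p _ => by congr
            rw [h', one_mul]
    rw [Finset.sum_congr rfl fun j _ => h2 j]
    rw [← Nat.cast_sum, hsum]
    push_cast
    ring
  -- every flow-carrying path has delay exactly b
  have hdle : ∀ p ∈ F.f.support, ((Gpart n a).pathDelay p : ℝ) ≤ (b : ℝ) := fun p hp =>
    Nat.cast_le.2 (le_trans (Finset.le_sup hp) hD)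
  have hub : ∑ p ∈ F.f.support, F.f p * (b : ℝ) = 2 * b := by
    rw [← Finset.sum_mul, hrate]
  have heqall : ∀ p ∈ F.f.support, F.f p * ((Gpart n a).pathDelay p : ℝ) = F.f p * (b : ℝ) :=
    (Finset.sum_eq_sum_iff_of_le fun p hp =>
      mul_le_mul_of_nonneg_left (hdle p hp) (F.nonneg p)).1 (by rw [hB, hub])
  have hdelay : ∀ p ∈ F.f.support, (Gpart n a).pathDelay p = b := by
    intro p hp
    have hne : F.f p ≠ 0 := Finsupp.mem_support_iff.1 hp
    have := mul_left_cancel₀ hne (heqall p hp)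
    exact_mod_cast this
  -- the support is nonempty
  have hne : F.f.support.Nonempty := by
    by_contra h
    rw [Finset.not_nonempty_iff_eq_empty] at h
    rw [h] at hrate
    simp at hrate
  obtain ⟨p, hp⟩ := hne
  refine ⟨Finset.univ.filter (fun j => Sum.inl j ∈ p), ?_, ?_⟩
  · rw [← (hstruct p hp).2, hdelay p hp]
  · have htot := Finset.sum_add_sum_compl
      (Finset.univ.filter (fun j => Sum.inl j ∈ p)) a
    rw [← (hstruct p hp).2, hdelay p hp, hsum] at htot
    omega
end

section
/- Let n ≥ 3 and consider the building-block graph B_n with nodes a_1,…,a_n and b_1,…,b_{n-1}, where for each i ∈ {1,…,n−1} there is an edge (a_i, a_{i+1}) with delay 1 and edges (a_i, b_i), (b_i, a_{i+1}) with delay 0, and all edges have capacity 1. Then any two edge-disjoint a_1–a_n paths p_1, p_2 satisfy d^{p_1} + d^{p_2} = n − 1, and consequently max(d^{p_1}, d^{p_2}) ≥ ⌈(n−1)/2⌉. -/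
/-- The building-block graph `B_n` of Fig. 3: spine nodes `a_1,…,a_n`
(`Sum.inl i` = `a_{i+1}`) and detour nodes `b_1,…,b_{n-1}` (`Sum.inr i` = `b_{i+1}`);
for each of the `n - 1` layers there is a direct edge `(a_i, a_{i+1})` of delay `1` and
a zero-delay two-edge route `(a_i, b_i), (b_i, a_{i+1})`; all edges have capacity `1`. -/
abbrev Bblock (n : ℕ) : Network (GV (n - 1)) (GE (n - 1)) :=
  Gpart (n - 1) (fun _ => 1)

/-- The source `a_1` of `B_n`. -/
abbrev BblockSrc (n : ℕ) : GV (n - 1) := Sum.inl 0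

/-- The sink `a_n` of `B_n`. -/
abbrev BblockSink (n : ℕ) : GV (n - 1) := Sum.inl (Fin.last (n - 1))

lemma gpart_path_struct_s10 (m : ℕ) (a : Fin m → ℕ) (i : Fin (m+1)) (p : List (GE m))
    (hp : (Gpart m a).IsPath (Sum.inl i) (Sum.inl (Fin.last m)) p) :
    (i = Fin.last m ∧ p = []) ∨
    ∃ j : Fin m, j.castSucc = i ∧
      ((∃ q, p = Sum.inl j :: q ∧
          (Gpart m a).IsPath (Sum.inl j.succ) (Sum.inl (Fin.last m)) q) ∨
       (∃ q, p = Sum.inr (Sum.inl j) :: Sum.inr (Sum.inr j) :: q ∧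
          (Gpart m a).IsPath (Sum.inl j.succ) (Sum.inl (Fin.last m)) q)) := by
  match p with
  | [] =>
    left
    simp only [Network.IsPath] at hp
    exact ⟨(Sum.inl.injEq _ _ ▸ hp), rfl⟩
  | Sum.inl j :: es =>
    right
    obtain ⟨hsrc, hrest⟩ := hp
    simp only [Gpart] at hsrc hrest
    exact ⟨j, Sum.inl.inj hsrc, Or.inl ⟨es, rfl, hrest⟩⟩
  | Sum.inr (Sum.inl j) :: es =>
    right
    obtain ⟨hsrc, hrest⟩ := hp
    simp only [Gpart] at hsrc hrest
    refine ⟨j, Sum.inl.inj hsrc, Or.inr ?_⟩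
    match es with
    | [] => simp [Network.IsPath] at hrest
    | Sum.inl j' :: es' =>
      obtain ⟨hsrc', _⟩ := hrest
      simp [Gpart] at hsrc'
    | Sum.inr (Sum.inl j') :: es' =>
      obtain ⟨hsrc', _⟩ := hrest
      simp [Gpart] at hsrc'
    | Sum.inr (Sum.inr j') :: es' =>
      obtain ⟨hsrc', hrest'⟩ := hrest
      simp only [Gpart] at hsrc' hrest'
      obtain rfl : j' = j := Sum.inr.inj hsrc'
      exact ⟨es', rfl, hrest'⟩
  | Sum.inr (Sum.inr j) :: es =>
    obtain ⟨hsrc, _⟩ := hp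
    simp [Gpart] at hsrc

lemma gpart_key (m : ℕ) : ∀ (k : ℕ) (i : Fin (m+1)), m - i.val = k →
    ∀ p q, (Gpart m (fun _ => 1)).IsPath (Sum.inl i) (Sum.inl (Fin.last m)) p →
      (Gpart m (fun _ => 1)).IsPath (Sum.inl i) (Sum.inl (Fin.last m)) q →
      (∀ e, ¬(e ∈ p ∧ e ∈ q)) →
      (Gpart m (fun _ => 1)).pathDelay p + (Gpart m (fun _ => 1)).pathDelay q = k := by
  intro k
  induction k with
  | zero =>
    intro i hi p q hp hq _
    have hplast : p = [] := by
      rcases gpart_path_struct_s10 m _ i p hp with ⟨_, rfl⟩ | ⟨j, hj, _⟩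
      · rfl
      · have := j.isLt
        have : j.castSucc.val = i.val := by rw [hj]
        simp [Fin.castSucc, Fin.castAdd, Fin.castLE] at this
        omega
    have hqlast : q = [] := by
      rcases gpart_path_struct_s10 m _ i q hq with ⟨_, rfl⟩ | ⟨j, hj, _⟩
      · rfl
      · have := j.isLt
        have : j.castSucc.val = i.val := by rw [hj]
        simp [Fin.castSucc, Fin.castAdd, Fin.castLE] at this
        omega
    subst hplast hqlast
    simp [Network.pathDelay]
  | succ k ih =>
    intro i hi p q hp hq hd
    have hilt : i.val < m := by omega
    rcases gpart_path_struct_s10 m _ i p hp with ⟨rfl, _⟩ | ⟨j, hj, hcp⟩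
    · simp [Fin.last] at hilt
    rcases gpart_path_struct_s10 m _ i q hq with ⟨rfl, _⟩ | ⟨j', hj', hcq⟩
    · simp [Fin.last] at hilt
    have hjj' : j' = j := by
      apply Fin.castSucc_injective
      rw [hj, hj']
    subst hjj'
    have hjval : j'.val = i.val := by
      have : j'.castSucc.val = i.val := by rw [hj]
      simpa using this
    have hk : m - j'.succ.val = k := by
      have := j'.isLt
      simp only [Fin.val_succ]
      omega
    rcases hcp with ⟨p', rfl, hp'⟩ | ⟨p', rfl, hp'⟩ <;>
      rcases hcq with ⟨q', rfl, hq'⟩ | ⟨q', rfl, hq'⟩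
    · exact absurd ⟨List.mem_cons_self, List.mem_cons_self⟩ (hd (Sum.inl j'))
    · have hd' : ∀ e, ¬(e ∈ p' ∧ e ∈ q') := fun e ⟨he1, he2⟩ =>
        hd e ⟨List.mem_cons_of_mem _ he1,
          List.mem_cons_of_mem _ (List.mem_cons_of_mem _ he2)⟩
      have := ih j'.succ hk p' q' hp' hq' hd'
      simp only [Network.pathDelay, List.map_cons, List.sum_cons, Gpart] at this ⊢
      omega
    · have hd' : ∀ e, ¬(e ∈ p' ∧ e ∈ q') := fun e ⟨he1, he2⟩ =>
        hd e ⟨List.mem_cons_of_mem _ (List.mem_cons_of_mem _ he1),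
          List.mem_cons_of_mem _ he2⟩
      have := ih j'.succ hk p' q' hp' hq' hd'
      simp only [Network.pathDelay, List.map_cons, List.sum_cons, Gpart] at this ⊢
      omega
    · exact absurd ⟨List.mem_cons_self, List.mem_cons_self⟩
        (hd (Sum.inr (Sum.inl j')))

/-- **Edge-disjoint path pairs in `B_n` (key step of Lemma 2).**
For `n ≥ 3`, any two edge-disjoint `a_1`–`a_n` paths `p₁, p₂` in `B_n` satisfy
`d^{p₁} + d^{p₂} = n - 1`, hence `max (d^{p₁}) (d^{p₂}) ≥ ⌈(n-1)/2⌉`. -/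
theorem bblock_disjoint_paths_delay (n : ℕ) (hn : 3 ≤ n)
    (p₁ p₂ : List (GE (n - 1)))
    (h₁ : (Bblock n).IsPath (BblockSrc n) (BblockSink n) p₁)
    (h₂ : (Bblock n).IsPath (BblockSrc n) (BblockSink n) p₂)
    (hdisj : ∀ e, ¬(e ∈ p₁ ∧ e ∈ p₂)) :
    (Bblock n).pathDelay p₁ + (Bblock n).pathDelay p₂ = n - 1 ∧
    (n - 1 + 1) / 2 ≤ max ((Bblock n).pathDelay p₁) ((Bblock n).pathDelay p₂) := by
  have h0 : ((0 : Fin (n - 1 + 1)) : ℕ) = 0 := rfl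
  have hsum := gpart_key (n - 1) (n - 1) 0 (by omega) p₁ p₂ h₁ h₂ hdisj
  have e1 : (Bblock n).pathDelay p₁ = (Gpart (n-1) (fun _ => 1)).pathDelay p₁ := rfl
  have e2 : (Bblock n).pathDelay p₂ = (Gpart (n-1) (fun _ => 1)).pathDelay p₂ := rfl
  refine ⟨by rw [e1, e2]; exact hsum, ?_⟩
  rw [e1, e2] at *
  have ha := le_max_left ((Bblock n).pathDelay p₁) ((Bblock n).pathDelay p₂)
  have hb := le_max_right ((Bblock n).pathDelay p₁) ((Bblock n).pathDelay p₂)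
  omega
end
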